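/- Fix a policy π² of agent 2 and define r̄(s,a¹) = ∑_{a²} π²(s,a²) · r(s,a¹,a²) and P_{π²}(s,a¹,s') = ∑_{a²} π²(s,a²) · P(s,a¹,a²,s'). Let π and π_t be agent-1 policies whose induced kernels P_{π,π²} and P_{π_t,π²} have stationary distributions d_{π,π²} and d_{π_t,π²}, and set η(π') = ∑_s d_{π',π²}(s) · ∑_{a¹} π'(s,a¹) · r̄(s,a¹) for π' ∈ {π, π_t}. Suppose Q : S × A₁ → ℝ satisfies the Bellman equation Q(s,a¹) = r̄(s,a¹) − η(π_t) + ∑_{s'} P_{π²}(s,a¹,s') · Q^{π_t}(s') for all (s,a¹), where Q^{π'}(s) = ∑_{a¹} π'(s,a¹) · Q(s,a¹). Then η(π) − η(π_t) = ∑_s d_{π,π²}(s) · (Q^{π}(s) − Q^{π_t}(s)). -/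
import Mathlib


/-- A probability vector on a finite type: nonnegative entries summing to 1. -/
def IsProbVec {S : Type*} [Fintype S] (d : S → ℝ) : Prop :=
  (∀ s, 0 ≤ d s) ∧ ∑ s, d s = 1

/-- A policy: each row is a probability vector over actions. -/
def IsPolicy {S A : Type*} [Fintype A] (π : S → A → ℝ) : Prop :=
  ∀ s, (∀ a, 0 ≤ π s a) ∧ ∑ a, π s a = 1

/-- The induced kernel P_{π₁,π₂}(s,s') = ∑_{a₁,a₂} π₁(s,a₁)·π₂(s,a₂)·P(s,a₁,a₂,s'). -/
def kernel {S A₁ A₂ : Type*} [Fintype A₁] [Fintype A₂]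
    (P : S → A₁ → A₂ → S → ℝ) (π₁ : S → A₁ → ℝ) (π₂ : S → A₂ → ℝ) : S → S → ℝ :=
  fun s s' => ∑ a₁, ∑ a₂, π₁ s a₁ * π₂ s a₂ * P s a₁ a₂ s'

/-- Row-vector–matrix multiplication: (d ⬝ K) s' = ∑ s, d s · K s s'. -/
def vmul {S : Type*} [Fintype S] (d : S → ℝ) (K : S → S → ℝ) : S → ℝ :=
  fun s' => ∑ s, d s * K s s'

/-- performance-difference identity: with r̄(s,a₁) = ∑_{a₂} π₂(s,a₂)r(s,a₁,a₂),
P_{π₂}(s,a₁,s') = ∑_{a₂} π₂(s,a₂)P(s,a₁,a₂,s'), stationary distributions d_{π,π₂}, d_{πt,π₂},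
average rewards η(π') = ∑_s d_{π',π₂}(s)·∑_{a₁} π'(s,a₁)·r̄(s,a₁), and Q satisfying the Bellman
equation w.r.t. πt, one has η(π) − η(πt) = ∑_s d_{π,π₂}(s)·(Q^π(s) − Q^{πt}(s)). -/
theorem stmt_8 {S A₁ A₂ : Type*} [Fintype S] [Nonempty S]
    [Fintype A₁] [Nonempty A₁] [Fintype A₂] [Nonempty A₂]
    (P : S → A₁ → A₂ → S → ℝ) (hP : ∀ s a₁ a₂, IsProbVec (P s a₁ a₂))
    (r : S → A₁ → A₂ → ℝ) (hr : ∀ s a₁ a₂, 0 ≤ r s a₁ a₂ ∧ r s a₁ a₂ ≤ 1)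
    (π₂ : S → A₂ → ℝ) (hπ₂ : IsPolicy π₂)
    (π πt : S → A₁ → ℝ) (hπ : IsPolicy π) (hπt : IsPolicy πt)
    (dπ dπt : S → ℝ)
    (hdπ : IsProbVec dπ) (hdπstat : vmul dπ (kernel P π π₂) = dπ)
    (hdπt : IsProbVec dπt) (hdπtstat : vmul dπt (kernel P πt π₂) = dπt)
    (Q : S → A₁ → ℝ)
    (hQ : ∀ s a₁, Q s a₁ =
      (∑ a₂, π₂ s a₂ * r s a₁ a₂)
      - (∑ s', dπt s' * ∑ a₁', πt s' a₁' * ∑ a₂, π₂ s' a₂ * r s' a₁' a₂)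
      + ∑ s', (∑ a₂, π₂ s a₂ * P s a₁ a₂ s') * (∑ a₁', πt s' a₁' * Q s' a₁')) :
    (∑ s, dπ s * ∑ a₁, π s a₁ * ∑ a₂, π₂ s a₂ * r s a₁ a₂)
      - (∑ s, dπt s * ∑ a₁, πt s a₁ * ∑ a₂, π₂ s a₂ * r s a₁ a₂)
    = ∑ s, dπ s * ((∑ a₁, π s a₁ * Q s a₁) - (∑ a₁, πt s a₁ * Q s a₁)) := by
  set ηt : ℝ := ∑ s', dπt s' * ∑ a₁', πt s' a₁' * ∑ a₂, π₂ s' a₂ * r s' a₁' a₂ with hηt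
  set V : S → ℝ := fun s' => ∑ a₁', πt s' a₁' * Q s' a₁' with hV
  -- step A: expand Q under a policy row of π
  have hA : ∀ s, ∑ a₁, π s a₁ * Q s a₁ =
      (∑ a₁, π s a₁ * ∑ a₂, π₂ s a₂ * r s a₁ a₂) - ηt
      + ∑ a₁, π s a₁ * ∑ s', (∑ a₂, π₂ s a₂ * P s a₁ a₂ s') * V s' := by
    intro s
    calc ∑ a₁, π s a₁ * Q s a₁
        = ∑ a₁, (π s a₁ * ∑ a₂, π₂ s a₂ * r s a₁ a₂ - π s a₁ * ηt
            + π s a₁ * ∑ s', (∑ a₂, π₂ s a₂ * P s a₁ a₂ s') * V s') := by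
          refine Finset.sum_congr rfl fun a₁ _ => ?_
          rw [hQ s a₁]; ring
      _ = (∑ a₁, π s a₁ * ∑ a₂, π₂ s a₂ * r s a₁ a₂) - (∑ a₁, π s a₁) * ηt
            + ∑ a₁, π s a₁ * ∑ s', (∑ a₂, π₂ s a₂ * P s a₁ a₂ s') * V s' := by
          rw [Finset.sum_add_distrib, Finset.sum_sub_distrib, Finset.sum_mul]
      _ = _ := by rw [(hπ s).2, one_mul]
  -- step B: stationarity
  have hB : ∑ s, dπ s * ∑ a₁, π s a₁ * ∑ s', (∑ a₂, π₂ s a₂ * P s a₁ a₂ s') * V s'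
      = ∑ s', dπ s' * V s' := by
    have hst : ∀ s', vmul dπ (kernel P π π₂) s' = dπ s' := fun s' => congrFun hdπstat s'
    calc ∑ s, dπ s * ∑ a₁, π s a₁ * ∑ s', (∑ a₂, π₂ s a₂ * P s a₁ a₂ s') * V s'
        = ∑ s, ∑ s', (dπ s * ∑ a₁, ∑ a₂, π s a₁ * π₂ s a₂ * P s a₁ a₂ s') * V s' := by
          refine Finset.sum_congr rfl fun s _ => ?_
          simp only [Finset.mul_sum, Finset.sum_mul]
          rw [Finset.sum_comm]
          refine Finset.sum_congr rfl fun s' _ => Finset.sum_congr rfl fun a₁ _ =>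
            Finset.sum_congr rfl fun a₂ _ => by ring
      _ = ∑ s', (vmul dπ (kernel P π π₂) s') * V s' := by
          rw [Finset.sum_comm]
          refine Finset.sum_congr rfl fun s' _ => ?_
          simp only [vmul, kernel, Finset.sum_mul]
      _ = ∑ s', dπ s' * V s' := by
          refine Finset.sum_congr rfl fun s' _ => ?_
          rw [hst s']
  -- combine
  have hmain : ∑ s, dπ s * ∑ a₁, π s a₁ * Q s a₁
      = (∑ s, dπ s * ∑ a₁, π s a₁ * ∑ a₂, π₂ s a₂ * r s a₁ a₂) - ηt + ∑ s', dπ s' * V s' := by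
    calc ∑ s, dπ s * ∑ a₁, π s a₁ * Q s a₁
        = ∑ s, (dπ s * (∑ a₁, π s a₁ * ∑ a₂, π₂ s a₂ * r s a₁ a₂) - dπ s * ηt
            + dπ s * ∑ a₁, π s a₁ * ∑ s', (∑ a₂, π₂ s a₂ * P s a₁ a₂ s') * V s') := by
          refine Finset.sum_congr rfl fun s _ => ?_
          rw [hA s]; ring
      _ = (∑ s, dπ s * ∑ a₁, π s a₁ * ∑ a₂, π₂ s a₂ * r s a₁ a₂) - (∑ s, dπ s) * ηt
            + ∑ s, dπ s * ∑ a₁, π s a₁ * ∑ s', (∑ a₂, π₂ s a₂ * P s a₁ a₂ s') * V s' := by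
          rw [Finset.sum_add_distrib, Finset.sum_sub_distrib, Finset.sum_mul]
      _ = _ := by rw [hdπ.2, one_mul, hB]
  have hsplit : ∑ s, dπ s * ((∑ a₁, π s a₁ * Q s a₁) - V s)
      = (∑ s, dπ s * ∑ a₁, π s a₁ * Q s a₁) - ∑ s, dπ s * V s := by
    rw [← Finset.sum_sub_distrib]
    exact Finset.sum_congr rfl fun s _ => by ring
  calc (∑ s, dπ s * ∑ a₁, π s a₁ * ∑ a₂, π₂ s a₂ * r s a₁ a₂) - ηt
      = (∑ s, dπ s * ∑ a₁, π s a₁ * Q s a₁) - ∑ s, dπ s * V s := by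
        rw [hmain]; ring
    _ = ∑ s, dπ s * ((∑ a₁, π s a₁ * Q s a₁) - V s) := hsplit.symm
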